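/- Let X be a set of pairwise non-opposite chambers of PG(3,q) and let l be a line. Then at most (q+1)q^2 chambers (Q,h,τ) of X satisfy Q ∉ l and l ⊆ τ. -/
import Mathlib


open Module

variable (F : Type*) [Field F] [Fintype F]

/-- Subspaces of the ambient 4-dimensional vector space over `F`; the rank 1, 2, 3
subspaces are the points, lines and planes of `PG(3, q)` where `q = |F|`. -/
abbrev SubPG := Submodule F (Fin 4 → F)

variable {F}

/-- `W` is a point of `PG(3, q)`. -/
def IsPt (W : SubPG F) : Prop := finrank F W = 1

/-- `W` is a line of `PG(3, q)`. -/
def IsLn (W : SubPG F) : Prop := finrank F W = 2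

/-- `W` is a plane of `PG(3, q)`. -/
def IsPl (W : SubPG F) : Prop := finrank F W = 3

/-- A chamber of `PG(3, q)`: a pairwise incident point-line-plane triple. -/
def IsChamber (c : SubPG F × SubPG F × SubPG F) : Prop :=
  IsPt c.1 ∧ IsLn c.2.1 ∧ IsPl c.2.2 ∧ c.1 ≤ c.2.1 ∧ c.2.1 ≤ c.2.2

/-- Two chambers are opposite if the point of each does not lie in the plane of the
other and their lines are skew. -/
def Opp (c c' : SubPG F × SubPG F × SubPG F) : Prop :=
  ¬ c.1 ≤ c'.2.2 ∧ c.2.1 ⊓ c'.2.1 = ⊥ ∧ ¬ c'.1 ≤ c.2.2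

/-- A point or plane `x` is incident with a line `l` when `x ⊆ l` or `l ⊆ x`. -/
def LineIncid (x l : SubPG F) : Prop := x ≤ l ∨ l ≤ x

/-- `F(x)`: the set of all chambers whose line is incident with `x`. -/
def FF (x : SubPG F) : Set (SubPG F × SubPG F × SubPG F) :=
  {c | IsChamber c ∧ LineIncid x c.2.1}

/-- A set of pairwise non-opposite chambers. -/
def NonOppSet (X : Set (SubPG F × SubPG F × SubPG F)) : Prop :=
  (∀ c ∈ X, IsChamber c) ∧ ∀ c ∈ X, ∀ c' ∈ X, ¬ Opp c c'

/-- A maximal set of pairwise non-opposite chambers. -/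
def MaxNonOppSet (X : Set (SubPG F × SubPG F × SubPG F)) : Prop :=
  NonOppSet X ∧ ∀ c : SubPG F × SubPG F × SubPG F, IsChamber c → c ∉ X → ∃ c' ∈ X, Opp c c'

-- AUX

instance : Finite (SubPG F) := Finite.of_injective _ SetLike.coe_injective

lemma pt_eq_of_le {Q K : SubPG F} (hQ : IsPt Q) (hle : Q ≤ K) (hK : finrank F K ≤ 1) :
    Q = K := Submodule.eq_of_le_of_finrank_le hle (hK.trans_eq hQ.symm)

lemma exists_functional (l : SubPG F) {w : Fin 4 → F} (hw : w ∉ l) :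
    ∃ f : (Fin 4 → F) →ₗ[F] F, l ≤ LinearMap.ker f ∧ f w = 1 := by
  have hne : l.mkQ w ≠ 0 := by
    simpa [Submodule.mkQ_apply, Submodule.Quotient.mk_eq_zero] using hw
  obtain ⟨g, hg⟩ : ∃ g : Module.Dual F ((Fin 4 → F) ⧸ l), g (l.mkQ w) ≠ 0 := by
    by_contra h
    push_neg at h
    exact hne ((Module.forall_dual_apply_eq_zero_iff F _).mp h)
  refine ⟨(g (l.mkQ w))⁻¹ • (g ∘ₗ l.mkQ), fun x hx => ?_, ?_⟩
  · simp [LinearMap.mem_ker, (Submodule.Quotient.mk_eq_zero l).mpr hx]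
  · simpa using inv_mul_cancel₀ hg

lemma pts_card (W : SubPG F) (f : (Fin 4 → F) →ₗ[F] F) :
    {Q : SubPG F | IsPt Q ∧ Q ≤ W ∧ ¬ Q ≤ LinearMap.ker f}.ncard
      ≤ Fintype.card F ^ finrank F ↥(LinearMap.ker f ⊓ W) := by
  set S := {Q : SubPG F | IsPt Q ∧ Q ≤ W ∧ ¬ Q ≤ LinearMap.ker f} with hS
  classical
  rcases S.eq_empty_or_nonempty with h | ⟨Q₀, hQ₀⟩
  · simp [h]
  -- for each Q in S choose a vector with f v = 1
  have key : ∀ Q ∈ S, ∃ v, v ∈ Q ∧ v ∈ W ∧ f v = 1 := by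
    rintro Q ⟨hQpt, hQW, hQk⟩
    obtain ⟨u, hu, hfu⟩ : ∃ u ∈ Q, f u ≠ 0 := by
      by_contra h
      push_neg at h
      exact hQk fun x hx => h x hx
    exact ⟨(f u)⁻¹ • u, Q.smul_mem _ hu, hQW (Q.smul_mem _ hu),
      by simp [inv_mul_cancel₀ hfu]⟩
  choose v hvQ hvW hfv using key
  have hvne : ∀ Q (hQ : Q ∈ S), v Q hQ ≠ 0 := by
    intro Q hQ h
    have := hfv Q hQ
    rw [h] at this
    simp at this
  have hspan : ∀ Q (hQ : Q ∈ S), Q = Submodule.span F {v Q hQ} := by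
    intro Q hQ
    refine (Submodule.eq_of_le_of_finrank_le
      ((Submodule.span_singleton_le_iff_mem _ _).mpr (hvQ Q hQ)) ?_).symm
    have h1 : finrank F ↥Q = 1 := hQ.1
    rw [h1, finrank_span_singleton (hvne Q hQ)]
  have hinj : Set.InjOn (fun Q => if h : Q ∈ S then v Q h - v Q₀ hQ₀ else 0) S := by
    intro Q hQ Q' hQ' h
    simp only [dif_pos hQ, dif_pos hQ'] at h
    rw [hspan Q hQ, hspan Q' hQ', sub_left_inj.mp h]
  have hmaps : ∀ Q ∈ S, (fun Q => if h : Q ∈ S then v Q h - v Q₀ hQ₀ else 0) Q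
      ∈ ((LinearMap.ker f ⊓ W : SubPG F) : Set (Fin 4 → F)) := by
    intro Q hQ
    simp only [dif_pos hQ, SetLike.mem_coe, Submodule.mem_inf]
    constructor
    · rw [LinearMap.mem_ker, map_sub, hfv Q hQ, hfv Q₀ hQ₀, sub_self]
    · exact Submodule.sub_mem _ (hvW Q hQ) (hvW Q₀ hQ₀)
  calc S.ncard ≤ ((LinearMap.ker f ⊓ W : SubPG F) : Set (Fin 4 → F)).ncard :=
        Set.ncard_le_ncard_of_injOn _ hmaps hinj (Set.toFinite _)
    _ = Fintype.card F ^ finrank F ↥(LinearMap.ker f ⊓ W) := by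
        have : Fintype ↥(LinearMap.ker f ⊓ W) := Fintype.ofFinite _
        rw [← Nat.card_coe_set_eq, Nat.card_eq_fintype_card]
        exact card_eq_pow_finrank (K := F)

lemma dim4 : finrank F (Fin 4 → F) = 4 := by simp

-- kernel-meet computation: if l ≤ W, w ∈ W \ l, l ≤ ker f, f w = 1, finrank W = finrank l + 1,
-- then ker f ⊓ W = l
lemma ker_inf_eq {l W : SubPG F} (f : (Fin 4 → F) →ₗ[F] F) (hlk : l ≤ LinearMap.ker f)
    (hlW : l ≤ W) {w : Fin 4 → F} (hwW : w ∈ W) (hfw : f w = 1)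
    (hdim : finrank F W = finrank F l + 1) :
    LinearMap.ker f ⊓ W = l := by
  have hle : l ≤ LinearMap.ker f ⊓ W := le_inf hlk hlW
  have hlt : LinearMap.ker f ⊓ W < W := by
    refine lt_of_le_of_ne inf_le_right fun h => ?_
    have : w ∈ LinearMap.ker f ⊓ W := h.symm ▸ hwW
    rw [Submodule.mem_inf, LinearMap.mem_ker] at this
    rw [this.1] at hfw
    simp at hfw
  have h1 : finrank F ↥(LinearMap.ker f ⊓ W) < finrank F W :=
    Submodule.finrank_lt_finrank_of_lt hlt
  have h2 : finrank F l ≤ finrank F ↥(LinearMap.ker f ⊓ W) := Submodule.finrank_mono hle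
  exact (Submodule.eq_of_le_of_finrank_le hle (by omega)).symm

-- points of a plane not on a line inside it: at most q^2
lemma planePts_card {l W : SubPG F} (hl : IsLn l) (hW : IsPl W) (hlW : l ≤ W) :
    {Q : SubPG F | IsPt Q ∧ Q ≤ W ∧ ¬ Q ≤ l}.ncard ≤ Fintype.card F ^ 2 := by
  obtain ⟨w, hwW, hwl⟩ : ∃ w ∈ W, w ∉ l := by
    by_contra h
    push_neg at h
    have : W ≤ l := h
    have := Submodule.finrank_mono this
    rw [hl, hW] at this
    omega
  obtain ⟨f, hlk, hfw⟩ := exists_functional l hwl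
  have hker : LinearMap.ker f ⊓ W = l :=
    ker_inf_eq f hlk hlW hwW hfw (by rw [hl, hW])
  have hsub : {Q : SubPG F | IsPt Q ∧ Q ≤ W ∧ ¬ Q ≤ l}
      = {Q : SubPG F | IsPt Q ∧ Q ≤ W ∧ ¬ Q ≤ LinearMap.ker f} := by
    ext Q
    simp only [Set.mem_setOf_eq, and_congr_right_iff]
    intro _ hQW
    constructor
    · intro h hk
      exact h (le_trans (le_inf hk hQW) hker.le)
    · intro h hk
      exact h (hk.trans hlk)
  rw [hsub]
  have := pts_card W f
  rwa [hker, hl] at this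

-- points on a line: at most q + 1
lemma linePts_card {l : SubPG F} (hl : IsLn l) :
    {Q : SubPG F | IsPt Q ∧ Q ≤ l}.ncard ≤ Fintype.card F + 1 := by
  obtain ⟨u, hul, hune⟩ : ∃ u ∈ l, u ≠ 0 := by
    rw [← Submodule.ne_bot_iff]
    intro h
    rw [h] at hl
    simp [IsLn] at hl
  obtain ⟨f, -, hfu⟩ := exists_functional ⊥ (by simpa using hune)
  have hsplit : {Q : SubPG F | IsPt Q ∧ Q ≤ l}
      ⊆ {Q : SubPG F | IsPt Q ∧ Q ≤ l ∧ ¬ Q ≤ LinearMap.ker f}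
        ∪ {Q : SubPG F | IsPt Q ∧ Q ≤ LinearMap.ker f ⊓ l} := by
    rintro Q ⟨h1, h2⟩
    by_cases h : Q ≤ LinearMap.ker f
    · exact Or.inr ⟨h1, le_inf h h2⟩
    · exact Or.inl ⟨h1, h2, h⟩
  have hK : finrank F ↥(LinearMap.ker f ⊓ l) ≤ 1 := by
    have hlt : LinearMap.ker f ⊓ l < l := by
      refine lt_of_le_of_ne inf_le_right fun h => ?_
      have : u ∈ LinearMap.ker f ⊓ l := h.symm ▸ hul
      rw [Submodule.mem_inf, LinearMap.mem_ker] at this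
      rw [this.1] at hfu
      simp at hfu
    have := Submodule.finrank_lt_finrank_of_lt hlt
    rw [hl] at this
    omega
  calc {Q : SubPG F | IsPt Q ∧ Q ≤ l}.ncard
      ≤ ({Q : SubPG F | IsPt Q ∧ Q ≤ l ∧ ¬ Q ≤ LinearMap.ker f}
        ∪ {Q : SubPG F | IsPt Q ∧ Q ≤ LinearMap.ker f ⊓ l}).ncard :=
        Set.ncard_le_ncard hsplit (Set.toFinite _)
    _ ≤ {Q : SubPG F | IsPt Q ∧ Q ≤ l ∧ ¬ Q ≤ LinearMap.ker f}.ncard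
        + {Q : SubPG F | IsPt Q ∧ Q ≤ LinearMap.ker f ⊓ l}.ncard := Set.ncard_union_le _ _
    _ ≤ Fintype.card F + 1 := by
        gcongr
        · calc {Q : SubPG F | IsPt Q ∧ Q ≤ l ∧ ¬ Q ≤ LinearMap.ker f}.ncard
              ≤ Fintype.card F ^ finrank F ↥(LinearMap.ker f ⊓ l) := pts_card l f
            _ ≤ Fintype.card F ^ 1 := Nat.pow_le_pow_right Fintype.card_pos hK
            _ = Fintype.card F := pow_one _
        · refine le_trans (Set.ncard_le_ncard ?_ (Set.toFinite _))
            (le_of_eq (Set.ncard_singleton (LinearMap.ker f ⊓ l)))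
          rintro Q ⟨h1, h2⟩
          exact pt_eq_of_le h1 h2 hK

-- points not on a line: at most q^3 + q^2
lemma allPts_card {l : SubPG F} (hl : IsLn l) :
    {Q : SubPG F | IsPt Q ∧ ¬ Q ≤ l}.ncard ≤ Fintype.card F ^ 3 + Fintype.card F ^ 2 := by
  obtain ⟨w, hwl⟩ : ∃ w, w ∉ l := by
    by_contra h
    push_neg at h
    have : (⊤ : SubPG F) ≤ l := fun x _ => h x
    have := Submodule.finrank_mono this
    rw [hl, finrank_top, dim4] at this
    omega
  obtain ⟨f, hlk, hfw⟩ := exists_functional l hwl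
  have hkd : finrank F ↥(LinearMap.ker f) = 3 := by
    have hsurj : Function.Surjective f := fun c => ⟨c • w, by simp [hfw]⟩
    have := LinearMap.finrank_range_add_finrank_ker f
    rw [LinearMap.range_eq_top.mpr hsurj, finrank_top, dim4,
      finrank_self] at this
    omega
  have hlker : IsPl (LinearMap.ker f) := hkd
  have hsplit : {Q : SubPG F | IsPt Q ∧ ¬ Q ≤ l}
      ⊆ {Q : SubPG F | IsPt Q ∧ Q ≤ ⊤ ∧ ¬ Q ≤ LinearMap.ker f}
        ∪ {Q : SubPG F | IsPt Q ∧ Q ≤ LinearMap.ker f ∧ ¬ Q ≤ l} := by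
    rintro Q ⟨h1, h2⟩
    by_cases h : Q ≤ LinearMap.ker f
    · exact Or.inr ⟨h1, h, h2⟩
    · exact Or.inl ⟨h1, le_top, h⟩
  calc {Q : SubPG F | IsPt Q ∧ ¬ Q ≤ l}.ncard
      ≤ _ := Set.ncard_le_ncard hsplit (Set.toFinite _)
    _ ≤ {Q : SubPG F | IsPt Q ∧ Q ≤ ⊤ ∧ ¬ Q ≤ LinearMap.ker f}.ncard
        + {Q : SubPG F | IsPt Q ∧ Q ≤ LinearMap.ker f ∧ ¬ Q ≤ l}.ncard :=
        Set.ncard_union_le _ _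
    _ ≤ Fintype.card F ^ 3 + Fintype.card F ^ 2 := by
        gcongr
        · have := pts_card ⊤ f
          rwa [inf_top_eq, hkd] at this
        · exact planePts_card hl hlker hlk

-- chamber structure lemmas
section chamber

variable {c : SubPG F × SubPG F × SubPG F} {l : SubPG F}

lemma pt_inf_bot (hch : IsChamber c) (hQl : ¬ c.1 ≤ l) : c.1 ⊓ l = ⊥ := by
  by_contra h
  have h1 : finrank F ↥(c.1 ⊓ l) ≠ 0 := fun h0 => h (Submodule.finrank_eq_zero.mp h0)
  have h2 : finrank F ↥(c.1 ⊓ l) ≤ 1 := by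
    have := Submodule.finrank_mono (inf_le_left : c.1 ⊓ l ≤ c.1)
    rw [hch.1] at this
    exact this
  have h3 : c.1 ⊓ l = c.1 :=
    pt_eq_of_le (by omega : finrank F ↥(c.1 ⊓ l) = 1) inf_le_left hch.1.le
  exact hQl (h3 ▸ inf_le_right)

-- the plane of such a chamber is l ⊔ Q
lemma plane_eq (hch : IsChamber c) (hl : IsLn l) (hQl : ¬ c.1 ≤ l) (hlt : l ≤ c.2.2) :
    c.2.2 = l ⊔ c.1 := by
  have hle : l ⊔ c.1 ≤ c.2.2 := sup_le hlt (hch.2.2.2.1.trans hch.2.2.2.2)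
  have hinf : l ⊓ c.1 = ⊥ := by rw [inf_comm]; exact pt_inf_bot hch hQl
  have hd : finrank F ↥(l ⊔ c.1) = 3 := by
    have := Submodule.finrank_sup_add_finrank_inf_eq l c.1
    rw [hinf, hl, hch.1, finrank_bot] at this
    omega
  exact (Submodule.eq_of_le_of_finrank_le hle (by rw [hd, hch.2.2.1])).symm

-- the line of such a chamber meets l in a point
lemma meet_isPt (hch : IsChamber c) (hl : IsLn l) (hQl : ¬ c.1 ≤ l) (hlt : l ≤ c.2.2) :
    IsPt (c.2.1 ⊓ l) := by
  have hsup : c.2.1 ⊔ l ≤ c.2.2 := sup_le hch.2.2.2.2 hlt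
  have h1 : finrank F ↥(c.2.1 ⊔ l) ≤ 3 := by
    have := Submodule.finrank_mono hsup
    rw [hch.2.2.1] at this
    exact this
  have h2 := Submodule.finrank_sup_add_finrank_inf_eq c.2.1 l
  rw [hch.2.1, hl] at h2
  have h3 : 1 ≤ finrank F ↥(c.2.1 ⊓ l) := by omega
  have h4 : finrank F ↥(c.2.1 ⊓ l) ≤ 2 := by
    have := Submodule.finrank_mono (inf_le_left : c.2.1 ⊓ l ≤ c.2.1)
    rw [hch.2.1] at this
    exact this
  have h5 : finrank F ↥(c.2.1 ⊓ l) ≠ 2 := by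
    intro h
    have : c.2.1 ⊓ l = c.2.1 :=
      Submodule.eq_of_le_of_finrank_le inf_le_left (by rw [hch.2.1, h])
    exact hQl (hch.2.2.2.1.trans (this ▸ inf_le_right))
  have : finrank F ↥(c.2.1 ⊓ l) = 1 := by omega
  exact this

-- the line of such a chamber is Q ⊔ (h ⊓ l)
lemma line_eq (hch : IsChamber c) (hl : IsLn l) (hQl : ¬ c.1 ≤ l) (hlt : l ≤ c.2.2) :
    c.2.1 = c.1 ⊔ (c.2.1 ⊓ l) := by
  have hle : c.1 ⊔ (c.2.1 ⊓ l) ≤ c.2.1 := sup_le hch.2.2.2.1 inf_le_left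
  have hinf : c.1 ⊓ (c.2.1 ⊓ l) = ⊥ := by
    have h1 : c.1 ⊓ (c.2.1 ⊓ l) ≤ c.1 ⊓ l := le_inf inf_le_left (inf_le_right.trans inf_le_right)
    rw [pt_inf_bot hch hQl] at h1
    exact le_bot_iff.mp h1
  have hd : finrank F ↥(c.1 ⊔ (c.2.1 ⊓ l)) = 2 := by
    have := Submodule.finrank_sup_add_finrank_inf_eq c.1 (c.2.1 ⊓ l)
    rw [hinf, hch.1, meet_isPt hch hl hQl hlt, finrank_bot] at this
    omega
  exact (Submodule.eq_of_le_of_finrank_le hle (by rw [hd, hch.2.1])).symm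

end chamber

lemma ncard_sprod {α β : Type*} (s : Set α) (t : Set β) :
    (s ×ˢ t).ncard = s.ncard * t.ncard := by
  rw [← Nat.card_coe_set_eq, ← Nat.card_coe_set_eq, ← Nat.card_coe_set_eq,
    Nat.card_congr (Equiv.Set.prod s t), Nat.card_prod]

lemma cross {c c' : SubPG F × SubPG F × SubPG F} {l : SubPG F}
    (hch : IsChamber c) (hch' : IsChamber c') (hl : IsLn l)
    (hQl : ¬ c.1 ≤ l) (hlt : l ≤ c.2.2) (hQl' : ¬ c'.1 ≤ l) (hlt' : l ≤ c'.2.2)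
    (hopp : ¬ Opp c c') (hne : l ⊔ c.1 ≠ l ⊔ c'.1) :
    c.2.1 ⊓ l = c'.2.1 ⊓ l := by
  have hpe := plane_eq hch hl hQl hlt
  have hpe' := plane_eq hch' hl hQl' hlt'
  have hd : finrank F ↥(c.2.2) = 3 := hch.2.2.1
  have hd' : finrank F ↥(c'.2.2) = 3 := hch'.2.2.1
  have hτne : c.2.2 ≠ c'.2.2 := by rw [hpe, hpe']; exact hne
  -- the first and third conditions of Opp hold
  have hA : ¬ c.1 ≤ c'.2.2 := by
    intro h
    have hsub : c.2.2 ≤ c'.2.2 := by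
      rw [hpe]
      exact sup_le hlt' h
    exact hτne (Submodule.eq_of_le_of_finrank_le hsub (by omega))
  have hC : ¬ c'.1 ≤ c.2.2 := by
    intro h
    have hsub : c'.2.2 ≤ c.2.2 := by
      rw [hpe']
      exact sup_le hlt h
    exact hτne.symm (Submodule.eq_of_le_of_finrank_le hsub (by omega))
  have hB : c.2.1 ⊓ c'.2.1 ≠ ⊥ := fun h => hopp ⟨hA, h, hC⟩
  -- the planes meet exactly in l
  have hppl : c.2.2 ⊓ c'.2.2 = l := by
    have hle : l ≤ c.2.2 ⊓ c'.2.2 := le_inf hlt hlt'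
    have h1 : finrank F ↥(c.2.2 ⊔ c'.2.2) ≤ 4 := by
      have := Submodule.finrank_le (c.2.2 ⊔ c'.2.2)
      rwa [dim4] at this
    have h2 := Submodule.finrank_sup_add_finrank_inf_eq c.2.2 c'.2.2
    rw [hd, hd'] at h2
    have h3 : finrank F ↥(c.2.2 ⊓ c'.2.2) ≠ 3 := by
      intro h
      have e1 : c.2.2 ⊓ c'.2.2 = c.2.2 :=
        Submodule.eq_of_le_of_finrank_le inf_le_left (by omega)
      have e2 : c.2.2 ⊓ c'.2.2 = c'.2.2 :=
        Submodule.eq_of_le_of_finrank_le inf_le_right (by omega)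
      exact hτne (e1 ▸ e2)
    have h4 : finrank F ↥(c.2.2 ⊓ c'.2.2) ≤ 3 := by
      have := Submodule.finrank_mono (inf_le_left : c.2.2 ⊓ c'.2.2 ≤ c.2.2)
      omega
    refine (Submodule.eq_of_le_of_finrank_le hle ?_).symm
    rw [hl]
    omega
  -- hence the lines meet inside l
  have hhl : c.2.1 ⊓ c'.2.1 ≤ c.2.1 ⊓ l := by
    refine le_inf inf_le_left ?_
    rw [← hppl]
    exact le_inf (inf_le_left.trans hch.2.2.2.2) (inf_le_right.trans hch'.2.2.2.2)
  have hhl' : c.2.1 ⊓ c'.2.1 ≤ c'.2.1 ⊓ l := by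
    refine le_inf inf_le_right ?_
    rw [← hppl]
    exact le_inf (inf_le_left.trans hch.2.2.2.2) (inf_le_right.trans hch'.2.2.2.2)
  have hr : 1 ≤ finrank F ↥(c.2.1 ⊓ c'.2.1) := by
    by_contra h
    exact hB (Submodule.finrank_eq_zero.mp (by omega))
  have e1 : c.2.1 ⊓ c'.2.1 = c.2.1 ⊓ l :=
    Submodule.eq_of_le_of_finrank_le hhl (by rw [meet_isPt hch hl hQl hlt]; omega)
  have e2 : c.2.1 ⊓ c'.2.1 = c'.2.1 ⊓ l :=
    Submodule.eq_of_le_of_finrank_le hhl' (by rw [meet_isPt hch' hl hQl' hlt']; omega)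
  rw [← e1, e2]


theorem card_chambers_plane_through_line (q : ℕ) (hq : Fintype.card F = q)
    (X : Set (SubPG F × SubPG F × SubPG F)) (hX : NonOppSet X)
    (l : SubPG F) (hl : IsLn l) :
    {c ∈ X | ¬ c.1 ≤ l ∧ l ≤ c.2.2}.ncard ≤ (q + 1) * q ^ 2 := by
  classical
  set S := {c ∈ X | ¬ c.1 ≤ l ∧ l ≤ c.2.2} with hSdef
  have hmem : ∀ c ∈ S, IsChamber c ∧ ¬ c.1 ≤ l ∧ l ≤ c.2.2 := by
    rintro c ⟨hcX, h1, h2⟩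
    exact ⟨hX.1 c hcX, h1, h2⟩
  rcases S.eq_empty_or_nonempty with h | ⟨c₀, hc₀⟩
  · simp [h]
  obtain ⟨hch₀, hQl₀, hlt₀⟩ := hmem c₀ hc₀
  by_cases hcase : ∀ c ∈ S, l ⊔ c.1 = l ⊔ c₀.1
  · -- all chambers lie in the same plane τ₀
    set τ₀ := c₀.2.2 with hτ₀
    have hplane : ∀ c ∈ S, c.2.2 = τ₀ := by
      intro c hc
      obtain ⟨hch, hQl, hlt⟩ := hmem c hc
      rw [plane_eq hch hl hQl hlt, hcase c hc, hτ₀, plane_eq hch₀ hl hQl₀ hlt₀]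
    set A₁ : Set (SubPG F) := {Q | IsPt Q ∧ Q ≤ τ₀ ∧ ¬ Q ≤ l} with hA₁
    set A₂ : Set (SubPG F) := {P | IsPt P ∧ P ≤ l} with hA₂
    have hmaps : ∀ c ∈ S, (c.1, c.2.1 ⊓ l) ∈ A₁ ×ˢ A₂ := by
      intro c hc
      obtain ⟨hch, hQl, hlt⟩ := hmem c hc
      refine ⟨⟨hch.1, ?_, hQl⟩, meet_isPt hch hl hQl hlt, inf_le_right⟩
      exact (hplane c hc) ▸ (hch.2.2.2.1.trans hch.2.2.2.2)
    have hinj : Set.InjOn (fun c => (c.1, c.2.1 ⊓ l)) S := by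
      intro c hc c' hc' h
      obtain ⟨hch, hQl, hlt⟩ := hmem c hc
      obtain ⟨hch', hQl', hlt'⟩ := hmem c' hc'
      replace h : (c.1, c.2.1 ⊓ l) = (c'.1, c'.2.1 ⊓ l) := h
      obtain ⟨h1, h2⟩ := Prod.mk.inj h
      have hline : c.2.1 = c'.2.1 := by
        rw [line_eq hch hl hQl hlt, line_eq hch' hl hQl' hlt', h1, h2]
      have hpl : c.2.2 = c'.2.2 := by rw [hplane c hc, hplane c' hc']
      exact Prod.ext h1 (Prod.ext hline hpl)
    calc S.ncard ≤ (A₁ ×ˢ A₂).ncard :=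
          Set.ncard_le_ncard_of_injOn _ hmaps hinj (Set.toFinite _)
      _ = A₁.ncard * A₂.ncard := ncard_sprod _ _
      _ ≤ q ^ 2 * (q + 1) := by
          have hb1 : A₁.ncard ≤ q ^ 2 := by
            rw [← hq]
            exact planePts_card hl hch₀.2.2.1
              (hlt₀.trans_eq (hplane c₀ hc₀ ▸ rfl))
          have hb2 : A₂.ncard ≤ q + 1 := by
            rw [← hq]
            exact linePts_card hl
          exact Nat.mul_le_mul hb1 hb2
      _ = (q + 1) * q ^ 2 := Nat.mul_comm _ _
  · -- chambers lie in at least two planes; all lines pass through a common point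
    push_neg at hcase
    obtain ⟨c₁, hc₁, hne₁⟩ := hcase
    obtain ⟨hch₁, hQl₁, hlt₁⟩ := hmem c₁ hc₁
    have hnopp : ∀ c ∈ S, ∀ c' ∈ S, ¬ Opp c c' := by
      intro c hc c' hc'
      exact hX.2 c hc.1 c' hc'.1
    have hP : ∀ c ∈ S, c.2.1 ⊓ l = c₀.2.1 ⊓ l := by
      intro c hc
      obtain ⟨hch, hQl, hlt⟩ := hmem c hc
      by_cases h : l ⊔ c.1 = l ⊔ c₀.1
      · have h1 : c.2.1 ⊓ l = c₁.2.1 ⊓ l := by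
          refine cross hch hch₁ hl hQl hlt hQl₁ hlt₁ (hnopp c hc c₁ hc₁) ?_
          rw [h]
          exact fun hh => hne₁ hh.symm
        have h2 : c₀.2.1 ⊓ l = c₁.2.1 ⊓ l :=
          cross hch₀ hch₁ hl hQl₀ hlt₀ hQl₁ hlt₁ (hnopp c₀ hc₀ c₁ hc₁)
            (fun hh => hne₁ hh.symm)
        rw [h1, h2]
      · exact cross hch hch₀ hl hQl hlt hQl₀ hlt₀ (hnopp c hc c₀ hc₀) h
    set B₁ : Set (SubPG F) := {Q | IsPt Q ∧ ¬ Q ≤ l} with hB₁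
    have hmaps : ∀ c ∈ S, c.1 ∈ B₁ := by
      intro c hc
      obtain ⟨hch, hQl, _⟩ := hmem c hc
      exact ⟨hch.1, hQl⟩
    have hinj : Set.InjOn (fun c => c.1) S := by
      intro c hc c' hc' h
      obtain ⟨hch, hQl, hlt⟩ := hmem c hc
      obtain ⟨hch', hQl', hlt'⟩ := hmem c' hc'
      replace h : c.1 = c'.1 := h
      have h2 : c.2.1 ⊓ l = c'.2.1 ⊓ l := by rw [hP c hc, hP c' hc']
      have hline : c.2.1 = c'.2.1 := by
        rw [line_eq hch hl hQl hlt, line_eq hch' hl hQl' hlt', h, h2]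
      have hpl : c.2.2 = c'.2.2 := by
        rw [plane_eq hch hl hQl hlt, plane_eq hch' hl hQl' hlt', h]
      exact Prod.ext h (Prod.ext hline hpl)
    calc S.ncard ≤ B₁.ncard := Set.ncard_le_ncard_of_injOn _ hmaps hinj (Set.toFinite _)
      _ ≤ q ^ 3 + q ^ 2 := by rw [← hq]; exact allPts_card hl
      _ ≤ (q + 1) * q ^ 2 := by ring_nf; omega
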